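/- Let K be a field of characteristic 0, n ≥ 1, and R = K[[x₁,…,xₙ]]. Let D be a K-derivation of R such that for every nonzero f ∈ R one has ord(D f − ∂f/∂x₁) ≥ ord(f). Then the map ker D → K[[x₂,…,xₙ]] sending g(x₁,x₂,…,xₙ) to g(0,x₂,…,xₙ) (substitution of 0 for x₁) is an isomorphism of K-algebras; in particular, for every g₀ ∈ K[[x₂,…,xₙ]] there exists a unique g ∈ ker D with g(0,x₂,…,xₙ) = g₀. -/

import Mathlib

/-- The total degree of a monomial exponent. -/
def tdeg {n : ℕ} (d : Fin n →₀ ℕ) : ℕ := d.sum fun _ e => e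

/-- The formal partial derivative `∂/∂xᵢ` on `K[[x₁,…,xₙ]]`, acting
coefficientwise. -/
noncomputable def formalPDeriv {K : Type*} [Field K] {n : ℕ} (i : Fin n)
    (f : MvPowerSeries (Fin n) K) : MvPowerSeries (Fin n) K :=
  fun d => ((d i + 1 : ℕ) : K) * MvPowerSeries.coeff (d + Finsupp.single i 1) f

/-- Substitution of `0` for the variable `xᵢ` in a power series: keeps only
the `xᵢ`-free monomials.  The result is viewed inside `K[[x₁,…,xₙ]]` as the
subring `K[[…,x̂ᵢ,…]]` of `xᵢ`-free power series. -/
noncomputable def substZero {K : Type*} [Field K] {n : ℕ} (i : Fin n)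
    (g : MvPowerSeries (Fin n) K) : MvPowerSeries (Fin n) K :=
  fun d => if d i = 0 then MvPowerSeries.coeff d g else 0

namespace Stmt4Aux

lemma tdeg_add {n : ℕ} (a b : Fin n →₀ ℕ) : tdeg (a + b) = tdeg a + tdeg b :=
  Finsupp.sum_add_index' (fun _ => rfl) (fun _ _ _ => rfl)

lemma tdeg_single {n : ℕ} (i : Fin n) (m : ℕ) : tdeg (Finsupp.single i m) = m :=
  Finsupp.sum_single_index rfl

lemma sub_single_add {n : ℕ} {i : Fin n} {d : Fin n →₀ ℕ} (h : d i ≠ 0) :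
    d - Finsupp.single i 1 + Finsupp.single i 1 = d := by
  ext j
  rcases eq_or_ne j i with rfl | hj
  · simp [Finsupp.single_apply]; omega
  · simp [Finsupp.single_apply, Ne.symm hj]

lemma tdeg_sub {n : ℕ} {i : Fin n} {d : Fin n →₀ ℕ} (h : d i ≠ 0) :
    tdeg (d - Finsupp.single i 1) + 1 = tdeg d := by
  conv_rhs => rw [← sub_single_add h]
  rw [tdeg_add, tdeg_single]

/-- Successive approximations (truncations) of the solution `g`:
`approx i E g₀ k` is the truncation to total degrees `< k`. -/
noncomputable def approx {K : Type*} [Field K] {n : ℕ} (i : Fin n)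
    (E : MvPowerSeries (Fin n) K → MvPowerSeries (Fin n) K)
    (g₀ : MvPowerSeries (Fin n) K) : ℕ → MvPowerSeries (Fin n) K
  | 0 => 0
  | (k + 1) => fun d =>
      if tdeg d < k + 1 then
        (if d i = 0 then g₀ d
         else - E (approx i E g₀ k) (d - Finsupp.single i 1) / ((d i : ℕ) : K))
      else 0

/-- `E` is "order-nondecreasing on differences". -/
def Ecomp {K : Type*} [Field K] {n : ℕ}
    (E : MvPowerSeries (Fin n) K → MvPowerSeries (Fin n) K) : Prop :=
  ∀ f f' : MvPowerSeries (Fin n) K, ∀ k : ℕ,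
    (∀ d : Fin n →₀ ℕ, tdeg d < k → f d = f' d) →
    ∀ d : Fin n →₀ ℕ, tdeg d < k → E f d = E f' d

lemma approx_agree {K : Type*} [Field K] {n : ℕ} (i : Fin n)
    (E : MvPowerSeries (Fin n) K → MvPowerSeries (Fin n) K)
    (g₀ : MvPowerSeries (Fin n) K) (hE : Ecomp E) :
    ∀ t : ℕ, ∀ d : Fin n →₀ ℕ, tdeg d = t → ∀ k m : ℕ, t < k → t < m →
      approx i E g₀ k d = approx i E g₀ m d := by
  intro t
  induction t using Nat.strong_induction_on with
  | _ t IH =>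
    intro d hd k m hk hm
    obtain ⟨k', rfl⟩ : ∃ k', k = k' + 1 := ⟨k - 1, by omega⟩
    obtain ⟨m', rfl⟩ : ∃ m', m = m' + 1 := ⟨m - 1, by omega⟩
    simp only [approx, hd, hk, hm, if_pos]
    rcases eq_or_ne (d i) 0 with h0 | h0
    · simp [h0]
    · have hsub : tdeg (d - Finsupp.single i 1) + 1 = t := by
        rw [tdeg_sub h0, hd]
      have hEeq : E (approx i E g₀ k') (d - Finsupp.single i 1)
          = E (approx i E g₀ m') (d - Finsupp.single i 1) := by
        apply hE _ _ t
        · intro d'' hd''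
          exact IH (tdeg d'') hd'' d'' rfl k' m' (by omega) (by omega)
        · omega
      simp [h0, hEeq]

end Stmt4Aux

open Stmt4Aux in
/-- Let `D` be a derivation of `K[[x₁,…,xₙ]]` whose lowest homogeneous
component is `∂/∂x₁`.  Then substitution of `0` for `x₁` is a `K`-algebra
homomorphism which restricts to an isomorphism `ker D ≃ K[[x₂,…,xₙ]]` (the
latter realized as the subalgebra of `x₁`-free power series): in particular,
for every `x₁`-free `g₀` there is a unique `g ∈ ker D` with
`g(0,x₂,…,xₙ) = g₀`. -/
theorem stmt4 {K : Type*} [Field K] [CharZero K] (n : ℕ) (hn : 1 ≤ n)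
    (D : Derivation K (MvPowerSeries (Fin n) K) (MvPowerSeries (Fin n) K))
    (hD : ∀ f : MvPowerSeries (Fin n) K, ∀ k : ℕ,
      (∀ d : Fin n →₀ ℕ, tdeg d < k → MvPowerSeries.coeff d f = 0) →
      (∀ d : Fin n →₀ ℕ, tdeg d < k →
        MvPowerSeries.coeff d (D f - formalPDeriv ⟨0, hn⟩ f) = 0)) :
    (∀ a b : MvPowerSeries (Fin n) K,
      substZero ⟨0, hn⟩ (a + b) = substZero ⟨0, hn⟩ a + substZero ⟨0, hn⟩ b) ∧
    (∀ a b : MvPowerSeries (Fin n) K,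
      substZero ⟨0, hn⟩ (a * b) = substZero ⟨0, hn⟩ a * substZero ⟨0, hn⟩ b) ∧
    (∀ c : K, substZero ⟨0, hn⟩ (algebraMap K (MvPowerSeries (Fin n) K) c) =
      algebraMap K (MvPowerSeries (Fin n) K) c) ∧
    (∀ g₀ : MvPowerSeries (Fin n) K,
      (∀ d : Fin n →₀ ℕ, d ⟨0, hn⟩ ≠ 0 → MvPowerSeries.coeff d g₀ = 0) →
      ∃! g : MvPowerSeries (Fin n) K, D g = 0 ∧ substZero ⟨0, hn⟩ g = g₀) := by
  set i : Fin n := ⟨0, hn⟩ with hi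
  have coeff_eq : ∀ (d : Fin n →₀ ℕ) (f : MvPowerSeries (Fin n) K),
      MvPowerSeries.coeff d f = f d := fun _ _ => rfl
  refine ⟨?_, ?_, ?_, ?_⟩
  · -- additivity
    intro a b
    funext d
    have hadd : (substZero i a + substZero i b) d
        = substZero i a d + substZero i b d := map_add (MvPowerSeries.coeff d) _ _
    have hab : MvPowerSeries.coeff d (a + b)
        = MvPowerSeries.coeff d a + MvPowerSeries.coeff d b := map_add _ _ _
    show (if d i = 0 then MvPowerSeries.coeff d (a + b) else 0) = _
    rw [hadd]
    by_cases h : d i = 0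
    · rw [if_pos h, hab]
      show _ = (if d i = 0 then MvPowerSeries.coeff d a else 0)
          + (if d i = 0 then MvPowerSeries.coeff d b else 0)
      rw [if_pos h, if_pos h]
    · rw [if_neg h]
      show (0 : K) = (if d i = 0 then MvPowerSeries.coeff d a else 0)
          + (if d i = 0 then MvPowerSeries.coeff d b else 0)
      rw [if_neg h, if_neg h, add_zero]
  · -- multiplicativity
    intro a b
    funext d
    show (if d i = 0 then MvPowerSeries.coeff d (a * b) else 0)
        = MvPowerSeries.coeff d (substZero i a * substZero i b)
    rw [MvPowerSeries.coeff_mul, MvPowerSeries.coeff_mul]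
    by_cases h : d i = 0
    · rw [if_pos h]
      apply Finset.sum_congr rfl
      intro p hp
      rw [Finset.HasAntidiagonal.mem_antidiagonal] at hp
      have h1 : p.1 i = 0 ∧ p.2 i = 0 := by
        have := congrArg (fun e : Fin n →₀ ℕ => e i) hp
        simp only [Finsupp.add_apply] at this
        omega
      simp [substZero, coeff_eq, h1.1, h1.2]
    · rw [if_neg h]
      refine (Finset.sum_eq_zero ?_).symm
      intro p hp
      rw [Finset.HasAntidiagonal.mem_antidiagonal] at hp
      have h1 : p.1 i ≠ 0 ∨ p.2 i ≠ 0 := by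
        have := congrArg (fun e : Fin n →₀ ℕ => e i) hp
        simp only [Finsupp.add_apply] at this
        omega
      rcases h1 with h1 | h1 <;> simp [substZero, coeff_eq, h1]
  · -- algebraMap
    intro c
    funext d
    show (if d i = 0 then MvPowerSeries.coeff d (algebraMap K _ c) else 0)
        = MvPowerSeries.coeff d (algebraMap K _ c)
    by_cases h : d i = 0
    · rw [if_pos h]
    · rw [if_neg h]
      have hd0 : d ≠ 0 := by
        intro h0; rw [h0] at h; exact h rfl
      rw [MvPowerSeries.algebraMap_apply, MvPowerSeries.coeff_C, if_neg hd0]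
  · -- existence and uniqueness
    intro g₀ hg₀
    set E : MvPowerSeries (Fin n) K → MvPowerSeries (Fin n) K :=
      fun f => D f - formalPDeriv i f with hE_def
    have hE : Ecomp E := by
      intro f f' k hff' d hd
      have hsub : ∀ d' : Fin n →₀ ℕ, tdeg d' < k →
          MvPowerSeries.coeff d' (f - f') = 0 := by
        intro d' hd'
        rw [coeff_eq]
        show f d' - f' d' = 0
        rw [hff' d' hd', sub_self]
      have := hD (f - f') k hsub d hd
      rw [coeff_eq] at this
      have hDsub : D (f - f') = D f - D f' := map_sub D f f'
      have hPsub : formalPDeriv i (f - f') d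
          = formalPDeriv i f d - formalPDeriv i f' d := by
        simp only [formalPDeriv, coeff_eq]
        show _ * (f (d + Finsupp.single i 1) - f' (d + Finsupp.single i 1)) = _
        ring
      have : (D f - D f') d - formalPDeriv i (f - f') d = 0 := by
        rw [← hDsub]; exact this
      rw [hPsub] at this
      show D f d - formalPDeriv i f d = D f' d - formalPDeriv i f' d
      have h2 : (D f - D f') d = D f d - D f' d := rfl
      rw [h2] at this
      linear_combination this
    set g : MvPowerSeries (Fin n) K := fun d => approx i E g₀ (tdeg d + 1) d with hg_def
    have stable : ∀ k : ℕ, ∀ d : Fin n →₀ ℕ, tdeg d < k → approx i E g₀ k d = g d := by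
      intro k d hd
      exact approx_agree i E g₀ hE (tdeg d) d rfl k (tdeg d + 1) hd (by omega)
    -- formula for g at monomials with d i ≠ 0
    have g_step : ∀ d : Fin n →₀ ℕ, d i ≠ 0 →
        g d = - E (approx i E g₀ (tdeg d)) (d - Finsupp.single i 1) / ((d i : ℕ) : K) := by
      intro d h0
      have ht : 0 < tdeg d := by
        have := tdeg_sub (i := i) h0; omega
      obtain ⟨t, ht'⟩ : ∃ t, tdeg d = t + 1 := ⟨tdeg d - 1, by omega⟩
      show approx i E g₀ (tdeg d + 1) d = _
      rw [ht']
      simp only [approx]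
      rw [if_pos (show tdeg d < t + 1 + 1 by omega), if_neg h0]
    have g_zero : ∀ d : Fin n →₀ ℕ, d i = 0 → g d = g₀ d := by
      intro d h0
      show approx i E g₀ (tdeg d + 1) d = g₀ d
      simp only [approx]
      rw [if_pos (by omega), if_pos h0]
    -- key: E g agrees with E of approximations
    have Eg_eq : ∀ d : Fin n →₀ ℕ, E g d = E (approx i E g₀ (tdeg d + 1)) d := by
      intro d
      apply hE _ _ (tdeg d + 1)
      · intro d'' hd''
        exact (stable _ _ hd'').symm
      · omega
    -- D g = 0
    have hDg : D g = 0 := by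
      funext d
      have h1 : D g d = formalPDeriv i g d + E g d := by
        show D g d = formalPDeriv i g d + (D g d - formalPDeriv i g d)
        ring
      have h2 : formalPDeriv i g d = ((d i + 1 : ℕ) : K) * g (d + Finsupp.single i 1) := rfl
      have h3 : (d + Finsupp.single i 1 : Fin n →₀ ℕ) i ≠ 0 := by
        rw [Finsupp.add_apply, Finsupp.single_apply, if_pos rfl]
        omega
      have h4 : tdeg (d + Finsupp.single i 1) = tdeg d + 1 := by
        rw [tdeg_add, tdeg_single]
      have h5 : (d + Finsupp.single i 1) - Finsupp.single i 1 = d := by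
        ext j
        rcases eq_or_ne j i with rfl | hj
        · simp [Finsupp.single_apply]
        · simp [Finsupp.single_apply, Ne.symm hj]
      have h6 : (d + Finsupp.single i 1 : Fin n →₀ ℕ) i = d i + 1 := by
        rw [Finsupp.add_apply, Finsupp.single_apply, if_pos rfl]
      have hcast : ((d i + 1 : ℕ) : K) ≠ 0 :=
        Nat.cast_ne_zero.mpr (Nat.succ_ne_zero (d i))
      rw [g_step _ h3, h4, h5, h6] at h2
      have h2' : formalPDeriv i g d = - E (approx i E g₀ (tdeg d + 1)) d := by
        rw [h2, ← mul_div_assoc, mul_div_cancel_left₀ _ hcast]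
      rw [Eg_eq d] at h1
      rw [h1, h2']
      exact neg_add_cancel _
    have hsubst : substZero i g = g₀ := by
      funext d
      show (if d i = 0 then g d else 0) = g₀ d
      by_cases h : d i = 0
      · rw [if_pos h, g_zero d h]
      · rw [if_neg h]
        exact (hg₀ d h).symm
    refine ⟨g, ⟨hDg, hsubst⟩, ?_⟩
    -- uniqueness
    intro g' ⟨hDg', hsubst'⟩
    funext d
    -- show g' d = g d by strong induction on tdeg
    suffices H : ∀ k : ℕ, ∀ d : Fin n →₀ ℕ, tdeg d < k → g' d = g d by
      exact H (tdeg d + 1) d (by omega)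
    intro k
    induction k with
    | zero => intro d hd; omega
    | succ k IH =>
      intro d hd
      rcases lt_or_ge (tdeg d) k with hlt | hge
      · exact IH d hlt
      · have hdk : tdeg d = k := by omega
        by_cases h0 : d i = 0
        · have h1 : substZero i g' d = substZero i g d := by rw [hsubst', hsubst]
          simpa [substZero, coeff_eq, h0] using h1
        · -- use hD on g' - g
          have hcoeffs : ∀ d' : Fin n →₀ ℕ, tdeg d' < k →
              MvPowerSeries.coeff d' (g' - g) = 0 := by
            intro d' hd'
            rw [coeff_eq]
            show g' d' - g d' = 0
            rw [IH d' hd', sub_self]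
          set d' := d - Finsupp.single i 1 with hd'def
          have hd' : tdeg d' < k := by
            have h := tdeg_sub (i := i) h0
            rw [← hd'def] at h
            omega
          have key := hD (g' - g) k hcoeffs d' hd'
          rw [coeff_eq] at key
          have hDsub : D (g' - g) = D g' - D g := map_sub D g' g
          have hDsub0 : D (g' - g) = 0 := by rw [hDsub, hDg', hDg, sub_zero]
          have key2 : formalPDeriv i (g' - g) d' = 0 := by
            have h1 : D (g' - g) d' - formalPDeriv i (g' - g) d' = 0 := key
            rw [hDsub0] at h1
            have h00 : (0 : MvPowerSeries (Fin n) K) d' = (0 : K) := rfl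
            rw [h00] at h1
            linear_combination -h1
          have hadd : d' + Finsupp.single i 1 = d := sub_single_add h0
          have hkey3 : ((d' i + 1 : ℕ) : K)
              * MvPowerSeries.coeff (d' + Finsupp.single i 1) (g' - g) = 0 := key2
          rw [hadd] at hkey3
          have hcast : ((d' i + 1 : ℕ) : K) ≠ 0 :=
            Nat.cast_ne_zero.mpr (Nat.succ_ne_zero (d' i))
          have hsplit : MvPowerSeries.coeff d (g' - g)
              = MvPowerSeries.coeff d g' - MvPowerSeries.coeff d g :=
            map_sub (MvPowerSeries.coeff d) g' g
          rw [hsplit] at hkey3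
          have hsub0 : MvPowerSeries.coeff d g' - MvPowerSeries.coeff d g = 0 := by
            rcases mul_eq_zero.mp hkey3 with h | h
            · exact absurd h hcast
            · exact h
          exact sub_eq_zero.mp hsub0
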